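/- arXiv:1710.05324 — 3 statements merged into one kernel-verified Lean document; each statement's English description precedes it below -/
import Mathlib

section
/- Every abstract group homomorphism f : G → H between compact abelian p-adic Lie groups is automatically continuous. -/
/-- A compact abelian `p`-adic Lie group (CPA group): a compact abelian topological group
containing an open subgroup topologically isomorphic to `ℤ_p^n` for some finite `n`. -/
def IsCPA (p : ℕ) [Fact p.Prime] (G : Type*) [AddCommGroup G] [TopologicalSpace G] : Prop :=
  IsTopologicalAddGroup G ∧ CompactSpace G ∧
    ∃ (n : ℕ) (H : AddSubgroup G), IsOpen (H : Set G) ∧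
      ∃ e : H ≃ₜ (Fin n → ℤ_[p]), ∀ x y : H, e (x + y) = e x + e y

/-- The set of `p^k`-divisible tuples is open in `ℤ_p^n`. -/
lemma aux_isOpen (p : ℕ) [Fact p.Prime] (n k : ℕ) :
    IsOpen {y : Fin n → ℤ_[p] | ∀ i, y i ∈ Ideal.span {(p : ℤ_[p]) ^ k}} := by
  have h1 : IsOpen {x : ℤ_[p] | x ∈ Ideal.span {(p : ℤ_[p]) ^ k}} := by
    have heq : {x : ℤ_[p] | x ∈ Ideal.span {(p : ℤ_[p]) ^ k}}
        = Metric.ball 0 ((p : ℝ) ^ ((-(k : ℤ)) + 1)) := by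
      ext x
      simp only [Set.mem_setOf_eq, Metric.mem_ball, dist_zero_right]
      rw [← PadicInt.norm_le_pow_iff_mem_span_pow,
        PadicInt.norm_le_pow_iff_norm_lt_pow_add_one]
    rw [heq]
    exact Metric.isOpen_ball
  have heq : {y : Fin n → ℤ_[p] | ∀ i, y i ∈ Ideal.span {(p : ℤ_[p]) ^ k}}
      = ⋂ i, (fun y : Fin n → ℤ_[p] => y i) ⁻¹' {x : ℤ_[p] | x ∈ Ideal.span {(p : ℤ_[p]) ^ k}} := by
    ext y; simp
  rw [heq]
  exact isOpen_iInter_of_finite fun i => h1.preimage (continuous_apply i)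

/-- The subgroups `(p^k ℤ_p)^n` form a neighborhood basis of `0` in `ℤ_p^n`. -/
lemma aux_basis (p : ℕ) [Fact p.Prime] (n : ℕ) {N : Set (Fin n → ℤ_[p])}
    (hN : N ∈ nhds (0 : Fin n → ℤ_[p])) :
    ∃ k : ℕ, ∀ y : Fin n → ℤ_[p], (∀ i, y i ∈ Ideal.span {(p : ℤ_[p]) ^ k}) → y ∈ N := by
  obtain ⟨ε, hε, hball⟩ := Metric.mem_nhds_iff.1 hN
  have hp1 : (1 : ℝ) < (p : ℝ) := by exact_mod_cast (Fact.out : p.Prime).one_lt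
  have hinv : (p : ℝ)⁻¹ < 1 := inv_lt_one_of_one_lt₀ hp1
  obtain ⟨k, hk⟩ := exists_pow_lt_of_lt_one hε hinv
  have hk' : (p : ℝ) ^ (-(k : ℤ)) < ε := by
    rwa [zpow_neg, zpow_natCast, ← inv_pow]
  refine ⟨k, fun y hy => hball ?_⟩
  rw [Metric.mem_ball, dist_zero_right]
  refine lt_of_le_of_lt ?_ hk'
  have hnonneg : (0 : ℝ) ≤ (p : ℝ) ^ (-(k : ℤ)) := by positivity
  rw [pi_norm_le_iff_of_nonneg hnonneg]
  intro i
  exact (PadicInt.norm_le_pow_iff_mem_span_pow (y i) k).2 (hy i)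

/-- Any nonzero natural number divides a power of `p` in `ℤ_p`, up to units. -/
lemma aux_dvd (p : ℕ) [Fact p.Prime] {m : ℕ} (hm : m ≠ 0) :
    ∃ k : ℕ, (m : ℤ_[p]) ∣ (p : ℤ_[p]) ^ k := by
  refine ⟨m.factorization p, ?_⟩
  set k := m.factorization p with hk
  set m' := m / p ^ k with hm'
  have hfac : p ^ k * m' = m := Nat.ordProj_mul_ordCompl_eq_self m p
  have hndvd : ¬ (p ∣ m') := Nat.not_dvd_ordCompl (Fact.out : p.Prime) hm
  have hu : IsUnit (m' : ℤ_[p]) := by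
    rw [PadicInt.isUnit_iff]
    refine le_antisymm (PadicInt.norm_le_one _) (le_of_not_gt fun h => ?_)
    have h2 : ‖((m' : ℤ) : ℤ_[p])‖ < 1 := by exact_mod_cast h
    have := (PadicInt.norm_int_lt_one_iff_dvd (m' : ℤ)).1 h2
    exact hndvd (by exact_mod_cast this)
  obtain ⟨u, hu⟩ := hu
  refine ⟨(↑u⁻¹ : ℤ_[p]), ?_⟩
  have hcast : (m : ℤ_[p]) = (p : ℤ_[p]) ^ k * (m' : ℤ_[p]) := by
    rw [← hfac]; push_cast; ring
  rw [hcast, ← hu, mul_assoc, ← Units.val_mul, mul_inv_cancel, Units.val_one, mul_one]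

/-- A finite-index subgroup of `ℤ_p^n` is open. -/
lemma aux_open_of_finiteIndex (p : ℕ) [Fact p.Prime] (n : ℕ)
    (C : AddSubgroup (Fin n → ℤ_[p])) (hC : C.index ≠ 0) :
    IsOpen (C : Set (Fin n → ℤ_[p])) := by
  obtain ⟨k, hdvd⟩ := aux_dvd p (m := C.index) hC
  refine AddSubgroup.isOpen_of_mem_nhds C (g := 0) ?_
  refine Filter.mem_of_superset ((aux_isOpen p n k).mem_nhds ?_) ?_
  · intro i
    simp
  · intro y hy
    have hz : ∀ i, ∃ z : ℤ_[p], y i = (C.index : ℤ_[p]) * z := by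
      intro i
      have h1 := hy i
      rw [Ideal.mem_span_singleton] at h1
      obtain ⟨c, hc⟩ := h1
      obtain ⟨d, hd⟩ := hdvd
      exact ⟨d * c, by rw [hc, hd, mul_assoc]⟩
    choose z hz using hz
    have hy' : y = C.index • z := by
      funext i
      rw [hz i]
      simp [nsmul_eq_mul]
    rw [hy']
    exact AddSubgroup.nsmul_index_mem C z

/-- Every abstract group homomorphism between compact abelian `p`-adic Lie groups is
automatically continuous. -/
theorem stmt2 (p : ℕ) [Fact p.Prime]
    (G H : Type*) [AddCommGroup G] [TopologicalSpace G] [AddCommGroup H] [TopologicalSpace H]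
    (hG : IsCPA p G) (hH : IsCPA p H) (f : G →+ H) :
    Continuous f := by
  obtain ⟨hGt, hGc, nG, U, hUopen, eG, heG⟩ := hG
  obtain ⟨hHt, hHc, nH, V, hVopen, eH, heH⟩ := hH
  haveI := hGt; haveI := hGc; haveI := hHt; haveI := hHc
  -- bundle the additive maps
  set eHhom : V →+ (Fin nH → ℤ_[p]) := AddMonoidHom.mk' (⇑eH) heH with heHhom
  have heGsymm : ∀ a b, eG.symm (a + b) = eG.symm a + eG.symm b := by
    intro a b
    apply eG.injective
    rw [heG, eG.apply_symm_apply, eG.apply_symm_apply, eG.apply_symm_apply]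
  set ψ : (Fin nG → ℤ_[p]) →+ U := AddMonoidHom.mk' (⇑eG.symm) heGsymm with hψ
  apply continuous_of_continuousAt_zero f
  rw [ContinuousAt, map_zero, Filter.tendsto_def]
  intro W hW
  -- Step 1: find an open subgroup S of H with S ⊆ W.
  have hWV : (Subtype.val ⁻¹' W : Set V) ∈ nhds (0 : V) :=
    continuous_subtype_val.continuousAt.preimage_mem_nhds hW
  have heH0 : eH (0 : V) = 0 := map_zero eHhom
  have hsymm0 : eH.symm 0 = 0 := by
    rw [← heH0, eH.symm_apply_apply]
  have hN : eH.symm ⁻¹' (Subtype.val ⁻¹' W) ∈ nhds (0 : Fin nH → ℤ_[p]) := by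
    refine eH.symm.continuous.continuousAt.preimage_mem_nhds ?_
    rwa [hsymm0]
  obtain ⟨k, hk⟩ := aux_basis p nH hN
  set BH : AddSubgroup (Fin nH → ℤ_[p]) :=
    (Submodule.pi Set.univ (fun _ : Fin nH => Ideal.span {(p : ℤ_[p]) ^ k})).toAddSubgroup
      with hBH
  have hBHmem : ∀ y : Fin nH → ℤ_[p],
      y ∈ BH ↔ ∀ i, y i ∈ Ideal.span {(p : ℤ_[p]) ^ k} := by
    intro y
    simp [hBH, Submodule.mem_pi]
  have hBHopen : IsOpen (BH : Set (Fin nH → ℤ_[p])) := by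
    have : (BH : Set (Fin nH → ℤ_[p]))
        = {y : Fin nH → ℤ_[p] | ∀ i, y i ∈ Ideal.span {(p : ℤ_[p]) ^ k}} := by
      ext y; exact hBHmem y
    rw [this]
    exact aux_isOpen p nH k
  set S : AddSubgroup H := (BH.comap eHhom).map V.subtype with hS
  have hSsub : (S : Set H) ⊆ W := by
    rintro s hs
    rw [hS] at hs
    obtain ⟨v, hv, rfl⟩ := hs
    have hv' : eHhom v ∈ BH := hv
    have h1 : eHhom v ∈ eH.symm ⁻¹' (Subtype.val ⁻¹' W) := hk _ ((hBHmem _).1 hv')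
    have h2 : eH.symm (eH v) ∈ Subtype.val ⁻¹' W := h1
    rwa [eH.symm_apply_apply] at h2
  have hSopen : IsOpen (S : Set H) := by
    have h1 : ((BH.comap eHhom : AddSubgroup V) : Set V) = eH ⁻¹' (BH : Set (Fin nH → ℤ_[p])) := rfl
    have h2 : IsOpen ((BH.comap eHhom : AddSubgroup V) : Set V) := by
      rw [h1]; exact hBHopen.preimage eH.continuous
    have h3 : (S : Set H) = Subtype.val '' ((BH.comap eHhom : AddSubgroup V) : Set V) := rfl
    rw [h3]
    exact hVopen.isOpenMap_subtype_val _ h2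
  -- Step 2: S has finite index, hence so does its preimage in G.
  haveI : Finite (H ⧸ S) := AddSubgroup.quotient_finite_of_isOpen S hSopen
  have hSindex : S.index ≠ 0 := AddSubgroup.index_ne_zero_of_finite
  set A : AddSubgroup G := S.comap f with hA
  have hAindex : A.index ≠ 0 := by
    rw [hA, AddSubgroup.index_comap]
    intro h
    exact hSindex (Nat.eq_zero_of_zero_dvd (h ▸ AddSubgroup.relIndex_dvd_index_of_normal S _))
  set A' : AddSubgroup U := A.comap U.subtype with hA'
  have hA'index : A'.index ≠ 0 := by
    rw [hA', AddSubgroup.index_comap]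
    intro h
    exact hAindex (Nat.eq_zero_of_zero_dvd (h ▸ AddSubgroup.relIndex_dvd_index_of_normal A _))
  set C : AddSubgroup (Fin nG → ℤ_[p]) := A'.comap ψ with hC
  have hCindex : C.index ≠ 0 := by
    rw [hC, AddSubgroup.index_comap]
    intro h
    exact hA'index (Nat.eq_zero_of_zero_dvd (h ▸ AddSubgroup.relIndex_dvd_index_of_normal A' _))
  have hCopen : IsOpen (C : Set (Fin nG → ℤ_[p])) := aux_open_of_finiteIndex p nG C hCindex
  -- Step 3: A' is open in U, hence A is a neighborhood of 0 in G.
  have hA'open : IsOpen (A' : Set U) := by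
    have h1 : (A' : Set U) = eG ⁻¹' (C : Set (Fin nG → ℤ_[p])) := by
      ext x
      constructor
      · intro hx
        show ψ (eG x) ∈ A'
        have : ψ (eG x) = x := eG.symm_apply_apply x
        rwa [this]
      · intro hx
        have h2 : ψ (eG x) ∈ A' := hx
        have : ψ (eG x) = x := eG.symm_apply_apply x
        rwa [this] at h2
    rw [h1]
    exact hCopen.preimage eG.continuous
  have hAnhds : (A : Set G) ∈ nhds (0 : G) := by
    have himg : IsOpen (Subtype.val '' (A' : Set U)) :=
      hUopen.isOpenMap_subtype_val _ hA'open
    have h0 : (0 : G) ∈ Subtype.val '' (A' : Set U) :=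
      ⟨(0 : U), A'.zero_mem, rfl⟩
    refine Filter.mem_of_superset (himg.mem_nhds h0) ?_
    rintro g ⟨u, hu, rfl⟩
    exact hu
  refine Filter.mem_of_superset hAnhds ?_
  intro g hg
  exact hSsub hg
end

section
/- Let A be a reduced commutative Noetherian ring, M a finite projective A-module, and X ⊆ Spec(A) a Zariski-dense set of primes. Then the natural map End_A(M) → ∏_{𝔭 ∈ X} End_{κ(𝔭)}(M ⊗_A κ(𝔭)) is injective, where κ(𝔭) denotes the residue field at 𝔭. Consequently, if a commutative A-subalgebra B ⊆ End_A(M) has reduced image in End_{κ(𝔭)}(M ⊗_A κ(𝔭)) for every 𝔭 ∈ X, then B is reduced. -/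
universe u

open TensorProduct in
/-- Auxiliary: an element of a reduced ring lying in every prime of a dense set of primes
is zero. -/
theorem stmt13_aux (A : Type u) [CommRing A] [IsReduced A]
    (X : Set (PrimeSpectrum A)) (hX : Dense X) (a : A)
    (ha : ∀ p ∈ X, a ∈ p.asIdeal) : a = 0 := by
  have hsub : X ⊆ PrimeSpectrum.zeroLocus {a} := by
    intro p hp
    simpa [PrimeSpectrum.mem_zeroLocus] using ha p hp
  have hcl : (Set.univ : Set (PrimeSpectrum A)) ⊆ PrimeSpectrum.zeroLocus {a} := by
    rw [← hX.closure_eq]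
    exact closure_minimal hsub (PrimeSpectrum.isClosed_zeroLocus _)
  have hnil : IsNilpotent a := by
    rw [nilpotent_iff_mem_prime]
    intro J hJ
    have := hcl (Set.mem_univ (⟨J, hJ⟩ : PrimeSpectrum A))
    simpa [PrimeSpectrum.mem_zeroLocus] using this
  exact hnil.eq_zero

open TensorProduct in
/-- Let `A` be a reduced commutative Noetherian ring, `M` a finite projective `A`-module and
`X ⊆ Spec A` a Zariski-dense set of primes.  For each prime `𝔭` let `k 𝔭` be the residue
field at `𝔭` (a field which is the fraction field of `A/𝔭`).  Then the natural base-change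
map `End_A(M) → ∏_{𝔭 ∈ X} End_{k 𝔭}(k 𝔭 ⊗_A M)` is injective; consequently any commutative
`A`-subalgebra `B ⊆ End_A(M)` whose image in each `End_{k 𝔭}(k 𝔭 ⊗_A M)`, `𝔭 ∈ X`, is
reduced, is itself reduced. -/
theorem stmt13 (A : Type u) [CommRing A] [IsNoetherianRing A] [IsReduced A]
    (M : Type u) [AddCommGroup M] [Module A M] [Module.Finite A M] [Module.Projective A M]
    (X : Set (PrimeSpectrum A)) (hX : Dense X)
    (k : PrimeSpectrum A → Type u) [∀ p, Field (k p)] [∀ p, Algebra A (k p)]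
    [∀ p : PrimeSpectrum A, Algebra (A ⧸ p.asIdeal) (k p)]
    [∀ p : PrimeSpectrum A, IsScalarTower A (A ⧸ p.asIdeal) (k p)]
    [∀ p : PrimeSpectrum A, IsFractionRing (A ⧸ p.asIdeal) (k p)] :
    Function.Injective
        (fun (f : Module.End A M) => fun q : X => LinearMap.baseChange (k q.1) f) ∧
      ∀ B : Subalgebra A (Module.End A M),
        (∀ x ∈ B, ∀ y ∈ B, x * y = y * x) →
        (∀ p ∈ X, ∀ b ∈ B, IsNilpotent (LinearMap.baseChange (k p) b) →
          LinearMap.baseChange (k p) b = 0) →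
        IsReduced B := by
  -- kernel of `algebraMap A (k p)` is `p`
  have hker : ∀ (p : PrimeSpectrum A) (a : A),
      algebraMap A (k p) a = 0 → a ∈ p.asIdeal := by
    intro p a ha
    have : algebraMap (A ⧸ p.asIdeal) (k p) (algebraMap A (A ⧸ p.asIdeal) a) = 0 := by
      rw [← IsScalarTower.algebraMap_apply]; exact ha
    have h2 : algebraMap A (A ⧸ p.asIdeal) a = 0 := by
      have hinj : Function.Injective (algebraMap (A ⧸ p.asIdeal) (k p)) :=
        IsFractionRing.injective _ _
      have := hinj (by simpa using this)
      simpa using this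
    rwa [← Ideal.Quotient.eq_zero_iff_mem]
  -- the injectivity statement
  have hinj : Function.Injective
      (fun (f : Module.End A M) => fun q : X => LinearMap.baseChange (k q.1) f) := by
    have h0 : ∀ f : Module.End A M,
        (∀ p ∈ X, LinearMap.baseChange (k p) f = 0) → f = 0 := by
      intro f hf
      obtain ⟨s, hs⟩ := Module.Projective.out (R := A) (P := M)
      have hsinj : Function.Injective s := hs.injective
      ext m
      simp only [LinearMap.zero_apply]
      apply hsinj
      rw [map_zero]
      ext j
      -- coordinate functional
      set φ : M →ₗ[A] A := (Finsupp.lapply j) ∘ₗ s with hφ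
      have key : ∀ p ∈ X, algebraMap A (k p) (φ (f m)) = 0 := by
        intro p hp
        have h1 : (LinearMap.baseChange (k p) φ) ((1 : k p) ⊗ₜ[A] f m) = 0 := by
          have : ((1 : k p) ⊗ₜ[A] f m) = (LinearMap.baseChange (k p) f) (1 ⊗ₜ[A] m) := by
            simp [LinearMap.baseChange_tmul]
          rw [this, hf p hp]
          simp
        have h2 : (LinearMap.baseChange (k p) φ) ((1 : k p) ⊗ₜ[A] f m)
            = (1 : k p) ⊗ₜ[A] (φ (f m)) := by
          simp [LinearMap.baseChange_tmul]
        have h3 : ((1 : k p) ⊗ₜ[A] (φ (f m)) : k p ⊗[A] A) = 0 := by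
          rw [← h2, h1]
        have h4 := congrArg (TensorProduct.rid A (k p)) h3
        simpa [TensorProduct.rid_tmul, Algebra.algebraMap_eq_smul_one] using h4
      have : ∀ p ∈ X, φ (f m) ∈ p.asIdeal := fun p hp => hker p _ (key p hp)
      have hz : φ (f m) = 0 := stmt13_aux A X hX _ this
      simpa [hφ] using hz
    intro f g hfg
    have : ∀ p ∈ X, LinearMap.baseChange (k p) (f - g) = 0 := by
      intro p hp
      have := congrFun hfg ⟨p, hp⟩
      simp only at this
      rw [LinearMap.baseChange_sub, this]
      exact sub_self (LinearMap.baseChange (k p) g)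
    have := h0 (f - g) this
    exact sub_eq_zero.mp this
  refine ⟨hinj, ?_⟩
  intro B _hcomm hred
  constructor
  rintro ⟨b, hb⟩ ⟨n, hn⟩
  have hbn : ((b : Module.End A M)) ^ n = 0 := by
    have := congrArg (Subalgebra.val B) hn
    simpa using this
  have hbz : (b : Module.End A M) = 0 := by
    apply hinj
    funext q
    obtain ⟨p, hp⟩ := q
    simp only
    rw [LinearMap.baseChange_zero]
    apply hred p hp b hb
    exact ⟨n, by rw [← LinearMap.baseChange_pow, hbn, LinearMap.baseChange_zero]⟩
  exact Subtype.ext hbz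
end

section
/- Let R be a ℚ_p-Banach algebra with ring of definition R₀, let M be a potentially orthonormalizable R-Banach module, and let M₀ be any open bounded R₀-submodule of M. Then the natural map Hom_{R₀}(M₀, R₀)[1/p] → Hom_{R,cont}(M, R) is an isomorphism onto the continuous R-linear dual M′ of M; moreover the topology on M′ (the operator-norm topology) coincides with the gauge topology defined by the R₀-submodule Hom_{R₀}(M₀, R₀). -/
universe u

/-- Let `R` be a `ℚ_p`-Banach algebra with ring of definition `R₀`, `M` a potentially
orthonormalizable `R`-Banach module (there is a family `(b i)` with `‖Σ aᵢ • bᵢ‖`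
uniformly comparable to `sup ‖aᵢ‖` on finitely supported families and with dense span), and
let `M₀` be any open bounded `R₀`-submodule of `M`.  Then the natural map
`Hom_{R₀}(M₀, R₀)[1/p] → Hom_{R,cont}(M, R)` is an isomorphism onto the continuous dual
`M′`: every `R₀`-linear `R₀`-valued functional on `M₀` extends uniquely to a continuous
`R`-linear functional on `M`, and every continuous functional lands in `R₀` on `M₀` after
multiplying by a power of `p`.  Moreover the operator-norm topology on `M′` is the gauge
topology of the lattice `L = Hom_{R₀}(M₀, R₀)`: `L` contains an operator-norm ball around
`0` and is operator-norm bounded. -/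
theorem stmt18 (p : ℕ) [Fact p.Prime]
    (R : Type u) [NormedRing R] [NormedAlgebra ℚ_[p] R] [CompleteSpace R]
    (R₀ : Subring R) (hR₀o : IsOpen (R₀ : Set R)) (hR₀b : Bornology.IsBounded (R₀ : Set R))
    (M : Type u) [NormedAddCommGroup M] [Module R M] [IsBoundedSMul R M] [CompleteSpace M]
    (hpo : ∃ (I : Type u) (b : I → M) (C₁ C₂ : ℝ), 0 < C₁ ∧ 0 < C₂ ∧
      (∀ a : I →₀ R,
        C₁ * (⨆ i, ‖a i‖) ≤ ‖a.sum fun i r => r • b i‖ ∧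
          ‖a.sum fun i r => r • b i‖ ≤ C₂ * (⨆ i, ‖a i‖)) ∧
      DenseRange fun a : I →₀ R => a.sum fun i r => r • b i)
    (M₀ : Set M) (h0 : (0 : M) ∈ M₀)
    (hadd : ∀ x ∈ M₀, ∀ y ∈ M₀, x + y ∈ M₀)
    (hsmul : ∀ r ∈ R₀, ∀ x ∈ M₀, r • x ∈ M₀)
    (hopen : IsOpen M₀) (hbdd : Bornology.IsBounded M₀) :
    (∀ φ : M → R,
        (∀ x ∈ M₀, ∀ y ∈ M₀, φ (x + y) = φ x + φ y) →
        (∀ r ∈ R₀, ∀ x ∈ M₀, φ (r • x) = r * φ x) →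
        (∀ x ∈ M₀, φ x ∈ R₀) →
        ∃! f : M →L[R] R, ∀ x ∈ M₀, f x = φ x) ∧
    (∀ f : M →L[R] R, ∃ n : ℕ, ∀ x ∈ M₀, (p : R) ^ n * f x ∈ R₀) ∧
    (∃ ε : ℝ, 0 < ε ∧ ∀ f : M →L[R] R, (∀ x : M, ‖f x‖ ≤ ε * ‖x‖) → ∀ x ∈ M₀, f x ∈ R₀) ∧
    (∃ C : ℝ, ∀ f : M →L[R] R, (∀ x ∈ M₀, f x ∈ R₀) → ∀ x : M, ‖f x‖ ≤ C * ‖x‖) := by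
  classical
  set π := algebraMap ℚ_[p] R with hπdef
  have hp1 : (1 : ℝ) < p := by exact_mod_cast (Fact.out : p.Prime).one_lt
  have hp0 : (0 : ℝ) < p := lt_trans one_pos hp1
  have hpne : ((p : ℚ_[p]) : ℚ_[p]) ≠ 0 := by
    exact_mod_cast (Fact.out : p.Prime).ne_zero
  have hπnorm : ∀ c : ℚ_[p], ‖π c‖ = ‖c‖ * ‖(1 : R)‖ := fun c => norm_algebraMap R c
  have hpc : ∀ n : ℕ, π ((p : ℚ_[p]) ^ n) = (p : R) ^ n := by
    intro n; rw [map_pow, map_natCast]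
  have hnormpow : ∀ n : ℕ, ‖π ((p : ℚ_[p]) ^ n)‖ = ((p : ℝ)⁻¹) ^ n * ‖(1 : R)‖ := by
    intro n; rw [hπnorm, norm_pow, Padic.norm_p]
  have hcomm : ∀ (c : ℚ_[p]) (r : R), π c * r = r * π c := fun c r => Algebra.commutes c r
  have hnormipow : ∀ n : ℕ, ‖π (((p : ℚ_[p]) ^ n)⁻¹)‖ = (p : ℝ) ^ n * ‖(1 : R)‖ := by
    intro n
    rw [hπnorm, norm_inv, norm_pow, Padic.norm_p, inv_pow, inv_inv]
  have hqinv : ∀ m k : ℕ, ((p : ℚ_[p]) ^ (m + k))⁻¹ * (p : ℚ_[p]) ^ k =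
      ((p : ℚ_[p]) ^ m)⁻¹ := by
    intro m k
    rw [pow_add, mul_inv, mul_assoc, inv_mul_cancel₀ (pow_ne_zero _ hpne), mul_one]
  -- balls inside the open sets
  obtain ⟨δM, hδM0, hδM⟩ := Metric.isOpen_iff.mp hopen 0 h0
  obtain ⟨δR, hδR0, hδR⟩ := Metric.isOpen_iff.mp hR₀o 0 R₀.zero_mem
  obtain ⟨BM, hBM⟩ := isBounded_iff_forall_norm_le.mp hbdd
  obtain ⟨BR, hBR⟩ := isBounded_iff_forall_norm_le.mp hR₀b
  have hBM0 : 0 ≤ BM := le_trans (by simp) (hBM 0 h0)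
  have hBR0 : 0 ≤ BR := le_trans (by simp) (hBR 0 R₀.zero_mem)
  have hRmem : ∀ k : ℕ, π ((p : ℚ_[p]) ^ k) ∈ R₀ := by
    intro k; rw [hpc]; exact pow_mem (natCast_mem R₀ p) k
  -- everything can be scaled into M₀ / R₀
  have hmemM : ∀ x : M, ∃ n : ℕ, π ((p : ℚ_[p]) ^ n) • x ∈ M₀ := by
    intro x
    obtain ⟨n, hn⟩ := exists_pow_lt_of_lt_one
      (show (0:ℝ) < δM / (‖(1:R)‖ * ‖x‖ + 1) by positivity)
      (show (p:ℝ)⁻¹ < 1 by rw [inv_lt_one_iff₀]; right; exact hp1)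
    refine ⟨n, hδM ?_⟩
    rw [Metric.mem_ball, dist_zero_right]
    calc ‖π ((p : ℚ_[p]) ^ n) • x‖ ≤ ‖π ((p : ℚ_[p]) ^ n)‖ * ‖x‖ := norm_smul_le _ _
      _ = ((p : ℝ)⁻¹) ^ n * (‖(1 : R)‖ * ‖x‖) := by rw [hnormpow]; ring
      _ < δM := by
          rw [lt_div_iff₀ (by positivity)] at hn
          nlinarith [pow_pos (show (0:ℝ) < (p:ℝ)⁻¹ by positivity) n, norm_nonneg x,
            norm_nonneg (1:R)]
  have hmemR : ∀ r : R, ∃ n : ℕ, π ((p : ℚ_[p]) ^ n) * r ∈ R₀ := by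
    intro r
    obtain ⟨n, hn⟩ := exists_pow_lt_of_lt_one
      (show (0:ℝ) < δR / (‖(1:R)‖ * ‖r‖ + 1) by positivity)
      (show (p:ℝ)⁻¹ < 1 by rw [inv_lt_one_iff₀]; right; exact hp1)
    refine ⟨n, hδR ?_⟩
    rw [Metric.mem_ball, dist_zero_right]
    calc ‖π ((p : ℚ_[p]) ^ n) * r‖ ≤ ‖π ((p : ℚ_[p]) ^ n)‖ * ‖r‖ := norm_mul_le _ _
      _ = ((p : ℝ)⁻¹) ^ n * (‖(1 : R)‖ * ‖r‖) := by rw [hnormpow]; ring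
      _ < δR := by
          rw [lt_div_iff₀ (by positivity)] at hn
          nlinarith [pow_pos (show (0:ℝ) < (p:ℝ)⁻¹ by positivity) n, norm_nonneg r,
            norm_nonneg (1:R)]
  have hup : ∀ (x : M) (n k : ℕ), π ((p : ℚ_[p]) ^ n) • x ∈ M₀ →
      π ((p : ℚ_[p]) ^ (n + k)) • x ∈ M₀ := by
    intro x n k hx
    have : π ((p : ℚ_[p]) ^ (n + k)) • x = π ((p : ℚ_[p]) ^ k) • (π ((p : ℚ_[p]) ^ n) • x) := by
      rw [smul_smul, ← map_mul, ← pow_add, add_comm k n]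
    rw [this]
    exact hsmul _ (hRmem k) _ hx
  -- cancellation of central units
  have hcancel : ∀ (c : ℚ_[p]) (a b : R), c ≠ 0 → π c * a = π c * b → a = b := by
    intro c a b hc h
    have := congrArg (fun z => π c⁻¹ * z) h
    simpa [← mul_assoc, ← map_mul, inv_mul_cancel₀ hc] using this
  -- the universal bound: any π-homogeneous map sending M₀ into R₀ is bounded
  set C : ℝ := p * BR * (‖(1 : R)‖ * ‖(1 : R)‖) / δM with hCdef
  have hbound : ∀ g : M → R, (∀ (c : ℚ_[p]) (x : M), g (π c • x) = π c * g x) →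
      (∀ x ∈ M₀, g x ∈ R₀) → ∀ x : M, ‖g x‖ ≤ C * ‖x‖ := by
    intro g hg hg0 x
    have hg00 : g 0 = 0 := by
      have := hg 0 0
      simpa using this
    rcases eq_or_ne x 0 with rfl | hx
    · simp [hg00]
    rcases eq_or_ne ‖(1 : R)‖ 0 with h1 | h1
    · -- R is trivial
      have h10 : (1 : R) = 0 := norm_eq_zero.mp h1
      have : g x = 0 := by
        calc g x = g x * 1 := (mul_one _).symm
          _ = 0 := by rw [h10, mul_zero]
      rw [this, norm_zero, hCdef, h1]
      positivity
    have h1pos : 0 < ‖(1 : R)‖ := lt_of_le_of_ne (norm_nonneg _) (Ne.symm h1)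
    have hxpos : 0 < ‖x‖ := norm_pos_iff.mpr hx
    obtain ⟨m, hm1, hm2⟩ := exists_mem_Ico_zpow
      (show (0:ℝ) < ‖(1:R)‖ * ‖x‖ / δM by positivity) hp1
    set c : ℚ_[p] := (p : ℚ_[p]) ^ (m + 1) with hcdef
    have hcne : c ≠ 0 := zpow_ne_zero _ hpne
    have hcnorm : ‖c‖ = ((p : ℝ)) ^ (-(m + 1)) := by
      rw [hcdef, norm_zpow, Padic.norm_p, inv_zpow, zpow_neg]
    have hcinvnorm : ‖c⁻¹‖ = ((p : ℝ)) ^ (m + 1) := by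
      rw [norm_inv, hcnorm, zpow_neg, inv_inv]
    have hmem : π c • x ∈ M₀ := by
      apply hδM
      rw [Metric.mem_ball, dist_zero_right]
      calc ‖π c • x‖ ≤ ‖π c‖ * ‖x‖ := norm_smul_le _ _
        _ = (p : ℝ) ^ (-(m + 1)) * (‖(1:R)‖ * ‖x‖) := by rw [hπnorm, hcnorm]; ring
        _ < δM := by
            rw [div_lt_iff₀ hδM0] at hm2
            have h2 : ‖(1:R)‖ * ‖x‖ < (p:ℝ) ^ (m + 1) * δM := hm2
            have hppos : (0:ℝ) < (p:ℝ) ^ (m + 1) := zpow_pos hp0 _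
            rw [zpow_neg]
            calc ((p:ℝ) ^ (m+1))⁻¹ * (‖(1:R)‖ * ‖x‖)
                < ((p:ℝ) ^ (m+1))⁻¹ * ((p:ℝ) ^ (m + 1) * δM) := by
                  exact mul_lt_mul_of_pos_left h2 (by positivity)
              _ = δM := by field_simp
    have key : g x = π c⁻¹ * g (π c • x) := by
      have := hg c⁻¹ (π c • x)
      rwa [smul_smul, ← map_mul, inv_mul_cancel₀ hcne, map_one, one_smul] at this
    have hb : ‖g (π c • x)‖ ≤ BR := hBR _ (hg0 _ hmem)
    have hzle : (p:ℝ) ^ (m+1) ≤ p * (‖(1:R)‖ * ‖x‖ / δM) := by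
      have : (p:ℝ) ^ (m+1) = p * (p:ℝ) ^ m := by
        rw [zpow_add_one₀ (ne_of_gt hp0)]; ring
      rw [this]
      exact mul_le_mul_of_nonneg_left hm1 (le_of_lt hp0)
    calc ‖g x‖ = ‖π c⁻¹ * g (π c • x)‖ := by rw [key]
      _ ≤ ‖π c⁻¹‖ * ‖g (π c • x)‖ := norm_mul_le _ _
      _ ≤ (‖c⁻¹‖ * ‖(1:R)‖) * BR := by
          apply mul_le_mul (le_of_eq (hπnorm _)) hb (norm_nonneg _) (by positivity)
      _ = (p:ℝ) ^ (m+1) * ‖(1:R)‖ * BR := by rw [hcinvnorm]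
      _ ≤ (p * (‖(1:R)‖ * ‖x‖ / δM)) * ‖(1:R)‖ * BR := by
          apply mul_le_mul_of_nonneg_right _ hBR0
          exact mul_le_mul_of_nonneg_right hzle (norm_nonneg _)
      _ = C * ‖x‖ := by rw [hCdef]; field_simp
  refine ⟨?_, ?_, ?_, ?_⟩
  · -- extension and uniqueness
    intro φ hφadd hφsmul hφmem
    set N : M → ℕ := fun x => (hmemM x).choose with hNdef
    have hN : ∀ x, π ((p : ℚ_[p]) ^ (N x)) • x ∈ M₀ := fun x => (hmemM x).choose_spec
    set F : M → R := fun x =>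
      π (((p : ℚ_[p]) ^ (N x))⁻¹) * φ (π ((p : ℚ_[p]) ^ (N x)) • x) with hFdef
    have step : ∀ (x : M) (m k : ℕ), π ((p : ℚ_[p]) ^ m) • x ∈ M₀ →
        π (((p : ℚ_[p]) ^ (m + k))⁻¹) * φ (π ((p : ℚ_[p]) ^ (m + k)) • x) =
          π (((p : ℚ_[p]) ^ m)⁻¹) * φ (π ((p : ℚ_[p]) ^ m) • x) := by
      intro x m k hx
      have e1 : π ((p : ℚ_[p]) ^ (m + k)) • x =
          π ((p : ℚ_[p]) ^ k) • (π ((p : ℚ_[p]) ^ m) • x) := by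
        rw [smul_smul, ← map_mul, ← pow_add, add_comm k m]
      rw [e1, hφsmul _ (hRmem k) _ hx, ← mul_assoc, ← map_mul, hqinv m k]
    have hind : ∀ (x : M) (n : ℕ), π ((p : ℚ_[p]) ^ n) • x ∈ M₀ →
        F x = π (((p : ℚ_[p]) ^ n)⁻¹) * φ (π ((p : ℚ_[p]) ^ n) • x) := by
      intro x n hn
      have h1 := step x (N x) (max (N x) n - N x) (hN x)
      have h2 := step x n (max (N x) n - n) hn
      rw [Nat.add_sub_cancel' (le_max_left _ _)] at h1
      rw [Nat.add_sub_cancel' (le_max_right _ _)] at h2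
      rw [hFdef]
      dsimp only
      rw [← h1, h2]
    have hFadd : ∀ x y : M, F (x + y) = F x + F y := by
      intro x y
      set n := max (N x) (N y) with hn
      have hx' : π ((p : ℚ_[p]) ^ n) • x ∈ M₀ := by
        have := hup x (N x) (n - N x) (hN x)
        rwa [Nat.add_sub_cancel' (le_max_left _ _)] at this
      have hy' : π ((p : ℚ_[p]) ^ n) • y ∈ M₀ := by
        have := hup y (N y) (n - N y) (hN y)
        rwa [Nat.add_sub_cancel' (le_max_right _ _)] at this
      have hxy : π ((p : ℚ_[p]) ^ n) • (x + y) ∈ M₀ := by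
        rw [smul_add]; exact hadd _ hx' _ hy'
      rw [hind (x + y) n hxy, hind x n hx', hind y n hy', smul_add,
        hφadd _ hx' _ hy', mul_add]
    have hFsmul : ∀ (r : R) (x : M), F (r • x) = r * F x := by
      intro r x
      obtain ⟨k, hk⟩ := hmemR r
      have hx' := hN x
      set n := N x with hndef
      have e : π ((p : ℚ_[p]) ^ (n + k)) • (r • x) =
          (π ((p : ℚ_[p]) ^ k) * r) • (π ((p : ℚ_[p]) ^ n) • x) := by
        rw [smul_smul, smul_smul, pow_add, map_mul, mul_assoc,
          hcomm ((p : ℚ_[p]) ^ n) (π ((p : ℚ_[p]) ^ k) * r)]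
      have hmem' : π ((p : ℚ_[p]) ^ (n + k)) • (r • x) ∈ M₀ := by
        rw [e]; exact hsmul _ hk _ hx'
      rw [hind (r • x) (n + k) hmem', e, hφsmul _ hk _ hx']
      have hFx : F x = π (((p : ℚ_[p]) ^ n)⁻¹) * φ (π ((p : ℚ_[p]) ^ n) • x) :=
        hind x n hx'
      rw [hFx, ← mul_assoc, ← mul_assoc, ← map_mul, hqinv n k,
        hcomm (((p : ℚ_[p]) ^ n)⁻¹) r, mul_assoc]
    have hFext : ∀ x ∈ M₀, F x = φ x := by
      intro x hx
      have := hind x 0 (by simpa using hx)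
      simpa using this
    have hFR : ∀ x ∈ M₀, F x ∈ R₀ := fun x hx => (hFext x hx) ▸ hφmem x hx
    have hFhom : ∀ (c : ℚ_[p]) (x : M), F (π c • x) = π c * F x := fun c x =>
      hFsmul (π c) x
    have hFb := hbound F hFhom hFR
    set Flin : M →ₗ[R] R :=
      { toFun := F
        map_add' := hFadd
        map_smul' := by intro r x; simpa [smul_eq_mul] using hFsmul r x } with hFlin
    set Fc : M →L[R] R := Flin.mkContinuous C hFb with hFc
    refine ⟨Fc, fun x hx => hFext x hx, ?_⟩
    intro g hg
    ext x
    obtain ⟨n, hn⟩ := hmemM x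
    have h1 : g (π ((p : ℚ_[p]) ^ n) • x) = Fc (π ((p : ℚ_[p]) ^ n) • x) := by
      rw [hg _ hn]
      exact (hFext _ hn).symm
    rw [map_smul, map_smul, smul_eq_mul, smul_eq_mul] at h1
    exact hcancel _ _ _ (pow_ne_zero n hpne) h1
  · -- multiplying by a power of p lands in R₀
    intro f
    obtain ⟨δf, hδf0, hδf⟩ : ∃ δ : ℝ, 0 < δ ∧ ∀ y : M, ‖y‖ < δ → ‖f y‖ < 1 := by
      obtain ⟨δ, hδ0, hδ⟩ := Metric.continuousAt_iff.mp (f.continuous.continuousAt (x := 0)) 1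
        one_pos
      refine ⟨δ, hδ0, fun y hy => ?_⟩
      have := hδ (x := y) (by simpa [dist_zero_right] using hy)
      simpa [dist_zero_right, map_zero] using this
    obtain ⟨j, hj⟩ := exists_pow_lt_of_lt_one
      (show (0:ℝ) < δf / (‖(1:R)‖ * BM + 1) by positivity)
      (show (p:ℝ)⁻¹ < 1 by rw [inv_lt_one_iff₀]; right; exact hp1)
    have hfM₀ : ∀ x ∈ M₀, ‖f x‖ ≤ (p : ℝ) ^ j * ‖(1:R)‖ := by
      intro x hx
      have h1 : ‖π ((p : ℚ_[p]) ^ j) • x‖ < δf := by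
        calc ‖π ((p : ℚ_[p]) ^ j) • x‖ ≤ ‖π ((p : ℚ_[p]) ^ j)‖ * ‖x‖ := norm_smul_le _ _
          _ = ((p : ℝ)⁻¹) ^ j * (‖(1:R)‖ * ‖x‖) := by rw [hnormpow]; ring
          _ < δf := by
              rw [lt_div_iff₀ (by positivity)] at hj
              have hxB : ‖(1:R)‖ * ‖x‖ ≤ ‖(1:R)‖ * BM :=
                mul_le_mul_of_nonneg_left (hBM x hx) (norm_nonneg _)
              nlinarith [pow_pos (show (0:ℝ) < (p:ℝ)⁻¹ by positivity) j,
                norm_nonneg x, norm_nonneg (1:R),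
                mul_nonneg (norm_nonneg (1:R)) (norm_nonneg x)]
      have h2 : ‖f (π ((p : ℚ_[p]) ^ j) • x)‖ < 1 := hδf _ h1
      have h3 : f x = π (((p : ℚ_[p]) ^ j)⁻¹) * f (π ((p : ℚ_[p]) ^ j) • x) := by
        rw [map_smul, smul_eq_mul, ← mul_assoc, ← map_mul,
          inv_mul_cancel₀ (pow_ne_zero _ hpne), map_one, one_mul]
      rw [h3]
      calc ‖π (((p : ℚ_[p]) ^ j)⁻¹) * f (π ((p : ℚ_[p]) ^ j) • x)‖
          ≤ ‖π (((p : ℚ_[p]) ^ j)⁻¹)‖ * ‖f (π ((p : ℚ_[p]) ^ j) • x)‖ := norm_mul_le _ _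
        _ ≤ ((p : ℝ) ^ j * ‖(1:R)‖) * 1 := by
            apply mul_le_mul (le_of_eq (hnormipow j)) h2.le (norm_nonneg _) (by positivity)
        _ = (p : ℝ) ^ j * ‖(1:R)‖ := mul_one _
    set Bf : ℝ := (p : ℝ) ^ j * ‖(1:R)‖ with hBfdef
    have hBf0 : 0 ≤ Bf := by positivity
    obtain ⟨n, hn⟩ := exists_pow_lt_of_lt_one
      (show (0:ℝ) < δR / (‖(1:R)‖ * Bf + 1) by positivity)
      (show (p:ℝ)⁻¹ < 1 by rw [inv_lt_one_iff₀]; right; exact hp1)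
    refine ⟨n, fun x hx => hδR ?_⟩
    rw [Metric.mem_ball, dist_zero_right]
    calc ‖(p : R) ^ n * f x‖ ≤ ‖(p : R) ^ n‖ * ‖f x‖ := norm_mul_le _ _
      _ = ((p : ℝ)⁻¹) ^ n * (‖(1:R)‖ * ‖f x‖) := by rw [← hpc, hnormpow]; ring
      _ < δR := by
          rw [lt_div_iff₀ (by positivity)] at hn
          have hfx' : ‖(1:R)‖ * ‖f x‖ ≤ ‖(1:R)‖ * Bf :=
            mul_le_mul_of_nonneg_left (hfM₀ x hx) (norm_nonneg _)
          nlinarith [pow_pos (show (0:ℝ) < (p:ℝ)⁻¹ by positivity) n,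
            norm_nonneg (f x), norm_nonneg (1:R),
            mul_nonneg (norm_nonneg (1:R)) (norm_nonneg (f x))]
  · -- small operator norm lands in R₀
    refine ⟨δR / (BM + 1), by positivity, ?_⟩
    intro f hf x hx
    apply hδR
    rw [Metric.mem_ball, dist_zero_right]
    calc ‖f x‖ ≤ δR / (BM + 1) * ‖x‖ := hf x
      _ ≤ δR / (BM + 1) * BM := by
          exact mul_le_mul_of_nonneg_left (hBM x hx) (by positivity)
      _ < δR := by
          rw [div_mul_eq_mul_div, div_lt_iff₀ (by positivity)]
          nlinarith
  · -- the lattice is bounded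
    refine ⟨C, fun f hf x => ?_⟩
    apply hbound (fun y => f y) _ hf
    intro c y
    simp [smul_eq_mul]
end
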